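/- ∑_{k=0}^∞ (1/2)_k^3 / (k!)^3 · (6k+1)/(−8)^k = 2√2/π. -/

import Mathlib

/-- The Pochhammer symbol `(x)ₖ = x (x+1) ⋯ (x+k-1)`, with `(x)₀ = 1`. -/
noncomputable def poch (x : ℝ) (k : ℕ) : ℝ :=
  ∏ i ∈ Finset.range k, (x + i)

open Finset Filter Real Topology

lemma poch_succ (x : ℝ) (k : ℕ) : poch x (k+1) = poch x k * (x + k) :=
  Finset.prod_range_succ _ _

lemma poch_succ' (x : ℝ) (k : ℕ) : poch x (k+1) = x * poch (x+1) k := by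
  induction k with
  | zero => simp [poch]
  | succ n ih =>
    rw [poch_succ, ih, poch_succ]
    push_cast
    ring

lemma poch_pos {x : ℝ} (hx : 0 < x) (k : ℕ) : 0 < poch x k :=
  Finset.prod_pos (fun i _ => by positivity)

lemma poch_one (k : ℕ) : poch 1 k = k.factorial := by
  induction k with
  | zero => simp [poch]
  | succ n ih =>
    rw [poch_succ, ih, Nat.factorial_succ]
    push_cast
    ring

lemma poch_neg_nat_eq_zero {m k : ℕ} (h : m < k) : poch (-(m:ℝ)) k = 0 :=
  Finset.prod_eq_zero (Finset.mem_range.2 h) (by simp)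

/-- the deformed summand -/
noncomputable def Fa (m k : ℕ) : ℝ :=
  (6*(k:ℝ)+1) * poch (1/2) k ^ 3 * poch (-(m:ℝ)) k /
    ((k.factorial : ℝ)^3 * poch (2*(m:ℝ)+3/2) k * 4^k)

/-- the ratio of consecutive closed forms -/
noncomputable def rho (m : ℕ) : ℝ := (16*((m:ℝ)+1)^2-1)/(16*((m:ℝ)+1)^2)

/-- WZ certificate multiplier -/
noncomputable def Qc (m k : ℕ) : ℝ := -(k:ℝ)^3*(2*(k:ℝ)+4*(m:ℝ)+5)/((6*(k:ℝ)+1)*((m:ℝ)+1)^3)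

set_option maxHeartbeats 2000000 in
lemma local_id (m k : ℕ) :
    Fa (m+1) k - rho m * Fa m k = Qc m (k+1) * Fa (m+1) (k+1) - Qc m k * Fa (m+1) k := by
  have hb : ((m:ℝ)+1) * poch (-(m:ℝ)) k = ((m:ℝ)+1-(k:ℝ)) * poch (-((m:ℝ)+1)) k := by
    have h1 := poch_succ' (-((m:ℝ)+1)) k
    rw [show -((m:ℝ)+1)+1 = -(m:ℝ) by ring] at h1
    have h2 := poch_succ (-((m:ℝ)+1)) k
    linear_combination h1 - h2
  have he : poch (2*(m:ℝ)+3/2) k * ((2*(m:ℝ)+3/2)+(k:ℝ)) * ((2*(m:ℝ)+5/2)+(k:ℝ))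
      = (2*(m:ℝ)+3/2) * (2*(m:ℝ)+5/2) * poch (2*((m:ℝ)+1)+3/2) k := by
    have e1 : poch (2*(m:ℝ)+3/2) (k+2)
        = poch (2*(m:ℝ)+3/2) k * ((2*(m:ℝ)+3/2)+(k:ℝ)) * ((2*(m:ℝ)+3/2)+(k:ℝ)+1) := by
      rw [poch_succ, poch_succ]
      push_cast
      ring
    have e2 : poch (2*(m:ℝ)+3/2) (k+2)
        = (2*(m:ℝ)+3/2) * ((2*(m:ℝ)+5/2) * poch (2*((m:ℝ)+1)+3/2) k) := by
      have f1 := poch_succ' (2*(m:ℝ)+3/2) (k+1)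
      have f2 := poch_succ' (2*(m:ℝ)+3/2+1) k
      rw [show 2*(m:ℝ)+3/2+1 = 2*(m:ℝ)+5/2 by ring] at f1
      rw [show 2*(m:ℝ)+3/2+1 = 2*(m:ℝ)+5/2 by ring,
          show 2*(m:ℝ)+5/2+1 = 2*((m:ℝ)+1)+3/2 by ring] at f2
      rw [f1, f2]
    linear_combination e2 - e1
  have hm1 : ((m:ℝ)+1) ≠ 0 := by positivity
  have hd1 : (2*(m:ℝ)+3/2)+(k:ℝ) ≠ 0 := by positivity
  have hd2 : (2*(m:ℝ)+5/2)+(k:ℝ) ≠ 0 := by positivity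
  have hB : poch (-(m:ℝ)) k = ((m:ℝ)+1-(k:ℝ)) * poch (-((m:ℝ)+1)) k / ((m:ℝ)+1) := by
    rw [eq_div_iff hm1]
    linear_combination hb
  have hE : poch (2*(m:ℝ)+3/2) k
      = (2*(m:ℝ)+3/2) * (2*(m:ℝ)+5/2) * poch (2*((m:ℝ)+1)+3/2) k
        / (((2*(m:ℝ)+3/2)+(k:ℝ)) * ((2*(m:ℝ)+5/2)+(k:ℝ))) := by
    rw [eq_div_iff (mul_ne_zero hd1 hd2)]
    linear_combination he
  have hkf : ((k.factorial : ℝ)) ≠ 0 := Nat.cast_ne_zero.2 k.factorial_ne_zero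
  have hDpos : 0 < poch (2*((m:ℝ)+1)+3/2) k := poch_pos (by positivity) k
  have hD : poch (2*((m:ℝ)+1)+3/2) k ≠ 0 := ne_of_gt hDpos
  have h23 : (2*(m:ℝ)+3/2) ≠ 0 := by positivity
  have h25 : (2*(m:ℝ)+5/2) ≠ 0 := by positivity
  have h4k : ((4:ℝ))^k ≠ 0 := by positivity
  set P : ℝ := poch (1/2) k ^ 3 * poch (-((m:ℝ)+1)) k /
      ((k.factorial : ℝ)^3 * poch (2*((m:ℝ)+1)+3/2) k * 4^k) with hP
  have h1 : Fa (m+1) k = (6*(k:ℝ)+1) * P := by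
    unfold Fa
    rw [hP]
    push_cast
    ring
  have h2 : Fa m k = (6*(k:ℝ)+1) * (((m:ℝ)+1-(k:ℝ)) * (((2*(m:ℝ)+3/2)+(k:ℝ))*((2*(m:ℝ)+5/2)+(k:ℝ)))
      / (((m:ℝ)+1) * ((2*(m:ℝ)+3/2)*(2*(m:ℝ)+5/2)))) * P := by
    unfold Fa
    rw [hB, hE, hP]
    field_simp
  have h3 : Fa (m+1) (k+1) = (6*(k:ℝ)+7) *
      ((1/2+(k:ℝ))^3*((k:ℝ)-(m:ℝ)-1)/(((k:ℝ)+1)^3*(2*((m:ℝ)+1)+3/2+(k:ℝ))*4)) * P := by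
    unfold Fa
    rw [Nat.factorial_succ]
    push_cast
    rw [poch_succ (1/2 : ℝ) k, poch_succ (-((m:ℝ)+1)) k, poch_succ (2*((m:ℝ)+1)+3/2) k,
        pow_succ (4:ℝ) k, hP]
    have hk1 : ((k:ℝ)+1) ≠ 0 := by positivity
    have hd3 : (2*((m:ℝ)+1)+3/2+(k:ℝ)) ≠ 0 := by positivity
    field_simp
    ring
  rw [h1, h2, h3]
  unfold rho Qc
  push_cast
  have hk1 : ((k:ℝ)+1) ≠ 0 := by positivity
  have hd3 : (2*((m:ℝ)+1)+3/2+(k:ℝ)) ≠ 0 := by positivity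
  have h6k : (6*(k:ℝ)+1) ≠ 0 := by positivity
  have h6k7 : (6*((k:ℝ)+1)+1) ≠ 0 := by positivity
  field_simp
  ring

lemma Fa_zero {m k : ℕ} (h : m < k) : Fa m k = 0 := by
  unfold Fa
  rw [poch_neg_nat_eq_zero h]
  simp

lemma sum_step (m : ℕ) :
    ∑ k ∈ range (m+2), Fa (m+1) k = rho m * ∑ k ∈ range (m+1), Fa m k := by
  have htel : ∑ k ∈ range (m+2), (Qc m (k+1) * Fa (m+1) (k+1) - Qc m k * Fa (m+1) k)
      = Qc m (m+2) * Fa (m+1) (m+2) - Qc m 0 * Fa (m+1) 0 :=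
    Finset.sum_range_sub (fun k => Qc m k * Fa (m+1) k) (m+2)
  have h1 : Fa (m+1) (m+2) = 0 := Fa_zero (by omega)
  have h2 : Qc m 0 = 0 := by simp [Qc]
  have hsum : ∑ k ∈ range (m+2), (Fa (m+1) k - rho m * Fa m k) = 0 := by
    rw [Finset.sum_congr rfl (fun k _ => local_id m k), htel, h1, h2]
    ring
  have hm : ∑ k ∈ range (m+2), Fa m k = ∑ k ∈ range (m+1), Fa m k := by
    rw [Finset.sum_range_succ, Fa_zero (by omega : m < m+1), add_zero]
  rw [Finset.sum_sub_distrib, ← Finset.mul_sum, sub_eq_zero, hm] at hsum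
  exact hsum

lemma finite_id (m : ℕ) :
    ∑ k ∈ range (m+1), Fa m k = ∏ j ∈ range m, (1 - (1/4:ℝ)^2/((j:ℝ)+1)^2) := by
  induction m with
  | zero => simp [Fa, poch]
  | succ n ih =>
    rw [sum_step n, ih, Finset.prod_range_succ]
    have : rho n = 1 - (1/4:ℝ)^2/((n:ℝ)+1)^2 := by
      unfold rho
      have : ((n:ℝ)+1)^2 ≠ 0 := by positivity
      field_simp
      ring
    rw [this]
    ring

lemma prod_lim :
    Tendsto (fun m => ∏ j ∈ range m, (1 - (1/4:ℝ)^2/((j:ℝ)+1)^2)) atTop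
      (𝓝 (2 * Real.sqrt 2 / π)) := by
  have h := Real.tendsto_euler_sin_prod (1/4)
  have h2 := h.const_mul (4/π)
  have hπ : π ≠ 0 := Real.pi_ne_zero
  have heq : (fun n : ℕ => (4/π) * (π * (1/4) * ∏ j ∈ range n, ((1:ℝ) - (1/4:ℝ)^2/((j:ℝ)+1)^2)))
      = fun m => ∏ j ∈ range m, (1 - (1/4:ℝ)^2/((j:ℝ)+1)^2) := by
    funext n
    field_simp
  rw [heq] at h2
  have hval : (4/π) * Real.sin (π * (1/4)) = 2 * Real.sqrt 2 / π := by
    rw [show π * (1/4) = π/4 by ring, Real.sin_pi_div_four]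
    ring
  rwa [hval] at h2

lemma factor_lim (i : ℕ) :
    Tendsto (fun m : ℕ => (-(m:ℝ)+(i:ℝ))/((2*(m:ℝ)+3/2+(i:ℝ))*4)) atTop (𝓝 (-1/8)) := by
  have hform : ∀ m : ℕ, (-(m:ℝ)+(i:ℝ))/((2*(m:ℝ)+3/2+(i:ℝ))*4)
      = -1/8 + (12*(i:ℝ)+6) / (8*(2*(m:ℝ)+3/2+(i:ℝ))*4) := by
    intro m
    have : (2*(m:ℝ)+3/2+(i:ℝ)) ≠ 0 := by positivity
    field_simp
    ring
  simp only [hform]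
  have hden : Tendsto (fun m : ℕ => 8*(2*(m:ℝ)+3/2+(i:ℝ))*4) atTop atTop := by
    apply Filter.Tendsto.atTop_mul_const (by norm_num : (0:ℝ) < 4)
    apply Filter.Tendsto.const_mul_atTop (by norm_num : (0:ℝ) < 8)
    apply Filter.tendsto_atTop_add_const_right
    apply Filter.tendsto_atTop_add_const_right
    apply Filter.Tendsto.const_mul_atTop (by norm_num : (0:ℝ) < 2)
    exact tendsto_natCast_atTop_atTop
  have h0 : Tendsto (fun m : ℕ => (12*(i:ℝ)+6) / (8*(2*(m:ℝ)+3/2+(i:ℝ))*4)) atTop (𝓝 0) :=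
    Filter.Tendsto.div_atTop tendsto_const_nhds hden
  have := h0.const_add (-1/8 : ℝ)
  simpa using this

lemma Fa_form (m k : ℕ) :
    Fa m k = (6*(k:ℝ)+1) * poch (1/2) k ^ 3 / (k.factorial : ℝ)^3
      * ∏ i ∈ range k, ((-(m:ℝ)+(i:ℝ))/((2*(m:ℝ)+3/2+(i:ℝ))*4)) := by
  have hp : ∏ i ∈ range k, ((-(m:ℝ)+(i:ℝ))/((2*(m:ℝ)+3/2+(i:ℝ))*4))
      = poch (-(m:ℝ)) k / (poch (2*(m:ℝ)+3/2) k * 4^k) := by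
    unfold poch
    rw [Finset.prod_div_distrib, Finset.prod_mul_distrib, Finset.prod_const, Finset.card_range]
  rw [hp]
  unfold Fa
  ring

lemma term_eq (k : ℕ) :
    (poch (1/2) k ^ 3) / ((k.factorial : ℝ) ^ 3) * ((6*(k : ℝ) + 1) / (-8 : ℝ) ^ k)
      = (6*(k:ℝ)+1) * poch (1/2) k ^ 3 / (k.factorial : ℝ)^3 * ∏ _i ∈ range k, (-1/8 : ℝ) := by
  rw [Finset.prod_const, Finset.card_range]
  have : ((-1/8 : ℝ))^k = ((-8:ℝ)^k)⁻¹ := by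
    rw [← inv_pow]
    norm_num
  rw [this]
  have h8 : ((-8:ℝ))^k ≠ 0 := pow_ne_zero _ (by norm_num)
  field_simp

lemma Fa_tendsto (k : ℕ) :
    Tendsto (fun m => Fa m k) atTop
      (𝓝 ((poch (1/2) k ^ 3) / ((k.factorial : ℝ) ^ 3) * ((6*(k : ℝ) + 1) / (-8 : ℝ) ^ k))) := by
  simp only [Fa_form, term_eq]
  exact Tendsto.const_mul _ (tendsto_finset_prod _ (fun i _ => factor_lim i))

lemma poch_half_le (k : ℕ) : poch (1/2) k ≤ (k.factorial : ℝ) := by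
  rw [← poch_one]
  unfold poch
  apply Finset.prod_le_prod
  · intro i _; positivity
  · intro i _; norm_num

lemma Fa_bound (m k : ℕ) : ‖Fa m k‖ ≤ (6*(k:ℝ)+1) * (1/8)^k := by
  rcases lt_or_ge m k with h | h
  · rw [Fa_zero h]
    simp only [norm_zero]
    positivity
  · -- k ≤ m
    have hApos : 0 < poch (1/2) k := poch_pos (by norm_num) k
    have hEpos : 0 < poch (2*(m:ℝ)+3/2) k := poch_pos (by positivity) k
    have hkf : (0:ℝ) < (k.factorial : ℝ) := by exact_mod_cast k.factorial_pos
    have hB2 : |poch (-(m:ℝ)) k| * 2^k ≤ poch (2*(m:ℝ)+3/2) k := by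
      unfold poch
      rw [Finset.abs_prod,
        show ((2:ℝ))^k = ∏ _i ∈ range k, (2:ℝ) by rw [Finset.prod_const, Finset.card_range],
        ← Finset.prod_mul_distrib]
      apply Finset.prod_le_prod
      · intro i _; positivity
      · intro i hi
        have hik : i < k := Finset.mem_range.1 hi
        have him : (i:ℝ) ≤ (m:ℝ) := by
          have : i ≤ m := le_trans (Nat.le_of_lt hik) h
          exact_mod_cast this
        have habs : |(-(m:ℝ) + (i:ℝ))| = (m:ℝ) - (i:ℝ) := by
          rw [abs_of_nonpos (by linarith)]
          ring
        rw [habs]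
        linarith
    have hnorm : ‖Fa m k‖ = (6*(k:ℝ)+1) * poch (1/2) k ^ 3 * |poch (-(m:ℝ)) k| /
        ((k.factorial : ℝ)^3 * poch (2*(m:ℝ)+3/2) k * 4^k) := by
      unfold Fa
      rw [Real.norm_eq_abs, abs_div, abs_mul, abs_mul,
        abs_of_nonneg (show (0:ℝ) ≤ 6*(k:ℝ)+1 by positivity),
        abs_of_nonneg (show (0:ℝ) ≤ poch (1/2) k ^ 3 from by positivity),
        abs_of_nonneg (show (0:ℝ) ≤ ((k.factorial:ℝ))^3 * poch (2*(m:ℝ)+3/2) k * 4^k from by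
          have := poch_pos (show (0:ℝ) < 2*(m:ℝ)+3/2 by positivity) k
          positivity)]
    rw [hnorm]
    rw [div_le_iff₀ (by positivity)]
    have hA3 : poch (1/2) k ^ 3 ≤ (k.factorial : ℝ)^3 :=
      pow_le_pow_left₀ (le_of_lt hApos) (poch_half_le k) 3
    have h2k : (0:ℝ) < (2:ℝ)^k := by positivity
    have key : poch (1/2) k ^ 3 * (|poch (-(m:ℝ)) k| * 2^k)
        ≤ (k.factorial : ℝ)^3 * poch (2*(m:ℝ)+3/2) k :=
      mul_le_mul hA3 hB2 (by positivity) (by positivity)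
    have hprod : ((1:ℝ)/8)^k * 2^k * 4^k = 1 := by
      rw [← mul_pow, ← mul_pow]
      norm_num
    calc (6*(k:ℝ)+1) * poch (1/2) k ^ 3 * |poch (-(m:ℝ)) k|
        ≤ ((6*(k:ℝ)+1) * ((k.factorial : ℝ)^3 * poch (2*(m:ℝ)+3/2) k)) / 2^k := by
          rw [le_div_iff₀ h2k]
          calc (6*(k:ℝ)+1) * poch (1/2) k ^ 3 * |poch (-(m:ℝ)) k| * 2^k
              = (6*(k:ℝ)+1) * (poch (1/2) k ^ 3 * (|poch (-(m:ℝ)) k| * 2^k)) := by ring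
            _ ≤ (6*(k:ℝ)+1) * ((k.factorial : ℝ)^3 * poch (2*(m:ℝ)+3/2) k) :=
              mul_le_mul_of_nonneg_left key (by positivity)
      _ = (6*(k:ℝ)+1) * (1/8)^k * ((k.factorial : ℝ)^3 * poch (2*(m:ℝ)+3/2) k * 4^k) := by
          rw [div_eq_iff (ne_of_gt h2k)]
          linear_combination (-((6*(k:ℝ)+1) * ((k.factorial : ℝ)^3 * poch (2*(m:ℝ)+3/2) k))) * hprod

lemma bound_summable : Summable (fun k : ℕ => (6*(k:ℝ)+1) * (1/8)^k) := by
  have h1 : Summable (fun k : ℕ => (k:ℝ) * (1/8:ℝ)^k) := by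
    have := summable_pow_mul_geometric_of_norm_lt_one 1 (r := (1/8:ℝ)) (by norm_num)
    simpa using this
  have h2 : Summable (fun k : ℕ => (1/8:ℝ)^k) := summable_geometric_of_lt_one (by norm_num) (by norm_num)
  have := (h1.mul_left 6).add h2
  convert this using 2 with k
  case e'_3 => rfl
  ring

theorem example_thm3_p0q0 :
    ∑' k : ℕ, (poch (1/2) k ^ 3) / ((k.factorial : ℝ) ^ 3) * ((6*(k : ℝ) + 1) / (-8 : ℝ) ^ k) = 2 * Real.sqrt 2 / Real.pi := by
  have htsum_eq : ∀ m : ℕ, ∑' k : ℕ, Fa m k = ∑ k ∈ range (m+1), Fa m k := by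
    intro m
    apply tsum_eq_sum
    intro k hk
    apply Fa_zero
    simp only [Finset.mem_range] at hk
    omega
  have hdom : Tendsto (fun m => ∑' k : ℕ, Fa m k) atTop
      (𝓝 (∑' k : ℕ, (poch (1/2) k ^ 3) / ((k.factorial : ℝ) ^ 3) * ((6*(k : ℝ) + 1) / (-8 : ℝ) ^ k))) := by
    apply tendsto_tsum_of_dominated_convergence bound_summable Fa_tendsto
    exact Filter.Eventually.of_forall (fun m => fun k => Fa_bound m k)
  have hdom2 : Tendsto (fun m => ∑' k : ℕ, Fa m k) atTop (𝓝 (2 * Real.sqrt 2 / π)) := by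
    have : (fun m => ∑' k : ℕ, Fa m k)
        = fun m => ∏ j ∈ range m, (1 - (1/4:ℝ)^2/((j:ℝ)+1)^2) := by
      funext m
      rw [htsum_eq m, finite_id m]
    rw [this]
    exact prod_lim
  exact tendsto_nhds_unique hdom hdom2
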